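/- Let A be a commutative Noetherian ring and let B be a faithfully flat A-algebra. For ideals I of A write IB for the extension of I to B. Then for all integrally closed ideals I, J of A containing nonzerodivisors: (a) \overline{(IJ)B} = \overline{\overline{IB}\cdot\overline{JB}}, so that I maps to \overline{IB} is a monoid homomorphism ic(A) -> ic(B); and (b) if \overline{IB} = \overline{JB} then I = J, so this homomorphism is injective. -/

import Mathlib

/-- `x` satisfies an equation of integral dependence over the ideal `I`:
`x ^ n + a 1 * x ^ (n-1) + ⋯ + a (n-1) * x + a n = 0` with `a i ∈ I ^ i`. -/
def IsIntegralOverIdeal {A : Type*} [CommRing A] (I : Ideal A) (x : A) : Prop :=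
  ∃ n : ℕ, 0 < n ∧ ∃ a : ℕ → A, (∀ i, 1 ≤ i → i ≤ n → a i ∈ I ^ i) ∧
    x ^ n + ∑ i ∈ Finset.Icc 1 n, a i * x ^ (n - i) = 0

/-- The integral closure `\overline{I}` of an ideal `I`.  The set of elements integral
over `I` is in fact an ideal, so taking the ideal span of this set does not change it. -/
def intCl {A : Type*} [CommRing A] (I : Ideal A) : Ideal A :=
  Ideal.span {x | IsIntegralOverIdeal I x}

open Polynomial

section HasIC
variable {B : Type*} [CommRing B]

/-- Module-theoretic witness of integral dependence over an ideal. -/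
def HasIC (K : Ideal B) (x : B) : Prop :=
  ∃ M : Ideal B, M.FG ∧ (∃ r ∈ M, r ∈ nonZeroDivisors B) ∧ Ideal.span {x} * M ≤ K * M

theorem HasIC.mono {K K' : Ideal B} (h : K ≤ K') {x : B} (hx : HasIC K x) : HasIC K' x := by
  obtain ⟨M, h1, h2, h3⟩ := hx
  exact ⟨M, h1, h2, h3.trans (Ideal.mul_mono_left h)⟩

theorem hasIC_of_mem {K : Ideal B} (hB : ∃ r : B, r ∈ nonZeroDivisors B) {x : B}
    (hx : x ∈ K) : HasIC K x := by
  obtain ⟨r, hr⟩ := hB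
  refine ⟨Ideal.span {r}, Submodule.fg_span (Set.finite_singleton r),
    ⟨r, Ideal.mem_span_singleton_self r, hr⟩, Ideal.mul_mono_left ?_⟩
  rw [Ideal.span_le, Set.singleton_subset_iff]; exact hx

theorem HasIC.add {K : Ideal B} {x y : B} (hx : HasIC K x) (hy : HasIC K y) :
    HasIC K (x + y) := by
  obtain ⟨M, hM1, ⟨r, hrM, hr⟩, hM3⟩ := hx
  obtain ⟨N, hN1, ⟨s, hsN, hs⟩, hN3⟩ := hy
  refine ⟨M * N, Submodule.FG.mul hM1 hN1, ⟨r * s, Ideal.mul_mem_mul hrM hsN, mul_mem hr hs⟩, ?_⟩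
  have h1 : Ideal.span {x + y} ≤ Ideal.span {x} + Ideal.span {y} := by
    rw [Ideal.span_le, Set.singleton_subset_iff]
    exact add_mem (Ideal.mem_sup_left (Ideal.mem_span_singleton_self x))
      (Ideal.mem_sup_right (Ideal.mem_span_singleton_self y))
  calc Ideal.span {x + y} * (M * N)
      ≤ (Ideal.span {x} + Ideal.span {y}) * (M * N) := Ideal.mul_mono_left h1
    _ = Ideal.span {x} * M * N + M * (Ideal.span {y} * N) := by ring
    _ ≤ K * M * N + M * (K * N) :=
        add_le_add (Ideal.mul_mono_left hM3) (Ideal.mul_mono_right hN3)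
    _ = K * (M * N) + K * (M * N) := by ring_nf
    _ ≤ K * (M * N) := by simp

theorem HasIC.smul {K : Ideal B} (c : B) {x : B} (hx : HasIC K x) : HasIC K (c * x) := by
  obtain ⟨M, h1, h2, h3⟩ := hx
  refine ⟨M, h1, h2, le_trans (Ideal.mul_mono_left ?_) h3⟩
  rw [Ideal.span_le, Set.singleton_subset_iff]
  exact Ideal.mul_mem_left _ c (Ideal.mem_span_singleton_self x)

theorem HasIC.mul {K L : Ideal B} {x y : B} (hx : HasIC K x) (hy : HasIC L y) :
    HasIC (K * L) (x * y) := by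
  obtain ⟨M, hM1, ⟨r, hrM, hr⟩, hM3⟩ := hx
  obtain ⟨N, hN1, ⟨s, hsN, hs⟩, hN3⟩ := hy
  refine ⟨M * N, Submodule.FG.mul hM1 hN1,
    ⟨r * s, Ideal.mul_mem_mul hrM hsN, mul_mem hr hs⟩, ?_⟩
  calc Ideal.span {x * y} * (M * N)
      = (Ideal.span {x} * M) * (Ideal.span {y} * N) := by
        rw [← Ideal.span_singleton_mul_span_singleton]; ring
    _ ≤ (K * M) * (L * N) := Ideal.mul_mono hM3 hN3
    _ = K * L * (M * N) := by ring

/-- The Cayley–Hamilton direction: a module witness gives an equation of integral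
dependence. -/
theorem HasIC.isIntegral {K : Ideal B} {x : B} (h : HasIC K x) : IsIntegralOverIdeal K x := by
  classical
  obtain ⟨M, hfg, ⟨r, hrM, hr⟩, hle⟩ := h
  haveI : Module.Finite B M := Module.Finite.iff_fg.mpr hfg
  set φ : Module.End B M := algebraMap B (Module.End B M) x with hφ
  have hrange : LinearMap.range φ ≤ K • (⊤ : Submodule B M) := by
    rintro _ ⟨⟨m, hm⟩, rfl⟩
    rw [Submodule.mem_smul_top_iff, Ideal.smul_eq_mul]
    show (φ ⟨m, hm⟩ : B) ∈ K * M
    have : (φ ⟨m, hm⟩ : B) = x * m := by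
      simp [hφ, Module.algebraMap_end_apply, smul_eq_mul]
    rw [this]
    exact hle (Ideal.mul_mem_mul (Ideal.mem_span_singleton_self x) hm)
  obtain ⟨p, hmonic, _, hcoeff, haeval⟩ :=
    LinearMap.exists_monic_and_coeff_mem_pow_and_aeval_eq_zero_of_range_le_smul B φ K hrange
  -- deduce p.eval x = 0
  have heval : p.eval x = 0 := by
    have h1 : algebraMap B (Module.End B M) (p.eval x) = 0 := by
      rw [← Polynomial.aeval_algebraMap_apply_eq_algebraMap_eval]; exact haeval
    have h2 : p.eval x • (⟨r, hrM⟩ : M) = 0 := by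
      rw [← Module.algebraMap_end_apply (S := B), h1]; rfl
    have h3 : p.eval x * r = 0 := by
      have := congrArg (Subtype.val) h2
      simpa [smul_eq_mul] using this
    exact mem_nonZeroDivisors_iff_right.mp hr _ h3
  -- build the equation of integral dependence of degree d+1
  set d := p.natDegree with hd
  refine ⟨d + 1, Nat.succ_pos d, fun j => if j = d + 1 then 0 else p.coeff (d - j), ?_, ?_⟩
  · intro i h1i hid
    by_cases hi : i = d + 1
    · simp [hi]
    · have hile : i ≤ d := by omega
      show (if i = d + 1 then 0 else p.coeff (d - i)) ∈ K ^ i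
      rw [if_neg hi]
      have h2 : d - (d - i) = i := by omega
      simpa [h2] using hcoeff (d - i)
  · have hsplit := Finset.sum_Icc_succ_top (a := 1) (b := d)
      (f := fun j => (if j = d + 1 then 0 else p.coeff (d - j)) * x ^ (d + 1 - j)) (by omega)
    rw [hsplit]
    have htop : (if d + 1 = d + 1 then 0 else p.coeff (d - (d+1))) * x ^ (d + 1 - (d+1)) = 0 := by
      simp
    rw [htop, add_zero]
    have hre : ∑ j ∈ Finset.Icc 1 d,
        (if j = d + 1 then 0 else p.coeff (d - j)) * x ^ (d + 1 - j)
        = ∑ i ∈ Finset.range d, p.coeff i * x ^ (i + 1) := by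
      refine Finset.sum_nbij' (fun j => d - j) (fun i => d - i) ?_ ?_ ?_ ?_ ?_
      · intro j hj; simp only [Finset.mem_Icc] at hj; simp only [Finset.mem_range]; omega
      · intro i hi; simp only [Finset.mem_range] at hi; simp only [Finset.mem_Icc]; omega
      · intro j hj; simp only [Finset.mem_Icc] at hj; show d - (d - j) = j; omega
      · intro i hi; simp only [Finset.mem_range] at hi; show d - (d - i) = i; omega
      · intro j hj; simp only [Finset.mem_Icc] at hj
        show (if j = d + 1 then 0 else p.coeff (d - j)) * x ^ (d + 1 - j)
          = p.coeff (d - j) * x ^ (d - j + 1)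
        rw [if_neg (by omega)]
        have h3 : d + 1 - j = d - j + 1 := by omega
        rw [h3]
    rw [hre]
    have : p.eval x = ∑ i ∈ Finset.range (d + 1), p.coeff i * x ^ i :=
      Polynomial.eval_eq_sum_range x
    have hkey : x ^ (d + 1) + ∑ i ∈ Finset.range d, p.coeff i * x ^ (i + 1)
        = x * p.eval x := by
      rw [this, Finset.mul_sum, Finset.sum_range_succ, hmonic.coeff_natDegree]
      have h2 : x * (1 * x ^ d) = x ^ (d + 1) := by ring
      rw [h2, add_comm]
      congr 1
      apply Finset.sum_congr rfl; intro i _; ring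
    rw [hkey, heval, mul_zero]

theorem exists_finset_pow {I : Ideal B} : ∀ (i : ℕ) (z : B), z ∈ I ^ i →
    ∃ S : Finset B, ↑S ⊆ (I : Set B) ∧ z ∈ Ideal.span (S : Set B) ^ i := by
  classical
  intro i
  induction i with
  | zero => intro z hz; exact ⟨∅, by simp, by simpa using hz⟩
  | succ i ih =>
    intro z hz
    rw [pow_succ] at hz
    refine Submodule.mul_induction_on hz ?_ ?_
    · intro m hm y hy
      obtain ⟨S, hS1, hS2⟩ := ih m hm
      refine ⟨insert y S, ?_, ?_⟩
      · intro b hb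
        rcases Finset.mem_insert.mp (by exact_mod_cast hb) with h | h
        · exact h ▸ hy
        · exact hS1 (by exact_mod_cast h)
      · rw [pow_succ]
        refine Ideal.mul_mem_mul ?_ ?_
        · exact Ideal.pow_right_mono (Ideal.span_mono (by simp)) i hS2
        · exact Ideal.subset_span (by simp)
    · intro u v hu hv
      obtain ⟨S, hS1, hS2⟩ := hu
      obtain ⟨T, hT1, hT2⟩ := hv
      refine ⟨S ∪ T, ?_, ?_⟩
      · intro b hb
        rcases Finset.mem_union.mp (by exact_mod_cast hb) with h | h
        · exact hS1 (by exact_mod_cast h)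
        · exact hT1 (by exact_mod_cast h)
      · rw [pow_succ]
        exact add_mem
          (Ideal.pow_right_mono (Ideal.span_mono (by push_cast; exact Set.subset_union_left)) (i+1) hS2)
          (Ideal.pow_right_mono (Ideal.span_mono (by push_cast; exact Set.subset_union_right)) (i+1) hT2)

theorem isIntegral_hasIC (K I : Ideal B) (x : B)
    (hx : IsIntegralOverIdeal I x)
    (hI : ∀ y ∈ I, HasIC K y)
    (hr : ∃ r ∈ I, r ∈ nonZeroDivisors B) : HasIC K x := by
  classical
  obtain ⟨n, hn, a, ha, heq⟩ := hx
  obtain ⟨r, hrI, hrnzd⟩ := hr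
  have hSex : ∀ i ∈ Finset.Icc 1 n, ∃ S : Finset B, ↑S ⊆ (I : Set B) ∧
      a i ∈ Ideal.span (S : Set B) ^ i := fun i hi =>
    exists_finset_pow i (a i) (ha i (Finset.mem_Icc.mp hi).1 (Finset.mem_Icc.mp hi).2)
  choose! Sf hSf1 hSf2 using hSex
  set S : Finset B := insert r ((Finset.Icc 1 n).biUnion Sf) with hSdef
  have hSsub : ↑S ⊆ (I : Set B) := by
    intro b hb
    rcases Finset.mem_insert.mp (Finset.mem_coe.mp hb) with h | h
    · exact h ▸ hrI
    · obtain ⟨i, hi, hbi⟩ := Finset.mem_biUnion.mp h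
      exact hSf1 i hi (Finset.mem_coe.mpr hbi)
  set I' : Ideal B := Ideal.span ↑S with hI'def
  have hI'le : I' ≤ I := Ideal.span_le.mpr hSsub
  have haI' : ∀ i ∈ Finset.Icc 1 n, a i ∈ I' ^ i := by
    intro i hi
    refine Ideal.pow_right_mono (Ideal.span_mono ?_) i (hSf2 i hi)
    intro b hb
    exact Finset.mem_coe.mpr
      (Finset.mem_insert_of_mem (Finset.mem_biUnion.mpr ⟨i, hi, Finset.mem_coe.mp hb⟩))
  set T : Ideal B := I' + Ideal.span {x} with hTdef
  have hI'T : I' ≤ T := by rw [hTdef]; exact le_sup_left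
  have hxT : Ideal.span {x} ≤ T := by rw [hTdef]; exact le_sup_right
  -- x ^ n lies in I' * T ^ (n - 1)
  have hxn : x ^ n ∈ I' * T ^ (n - 1) := by
    have hx_eq : x ^ n = -∑ i ∈ Finset.Icc 1 n, a i * x ^ (n - i) :=
      eq_neg_of_add_eq_zero_left heq
    rw [hx_eq]
    refine neg_mem (Ideal.sum_mem _ fun i hi => ?_)
    have h1 : a i * x ^ (n - i) ∈ I' ^ i * Ideal.span {x} ^ (n - i) := by
      rw [Ideal.span_singleton_pow]
      exact Ideal.mul_mem_mul (haI' i hi) (Ideal.mem_span_singleton_self _)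
    have hi12 := Finset.mem_Icc.mp hi
    have hii : I' ^ i = I' * I' ^ (i - 1) := by
      rw [← pow_succ']; congr 1; omega
    have h2 : I' ^ i * Ideal.span {x} ^ (n - i) ≤ I' * T ^ (n - 1) := by
      calc I' ^ i * Ideal.span {x} ^ (n - i)
          = I' * (I' ^ (i - 1) * Ideal.span {x} ^ (n - i)) := by rw [hii]; ring
        _ ≤ I' * (T ^ (i - 1) * T ^ (n - i)) := Ideal.mul_mono_right
            (Ideal.mul_mono (Ideal.pow_right_mono hI'T _) (Ideal.pow_right_mono hxT _))
        _ = I' * T ^ (n - 1) := by rw [← pow_add]; congr 2; omega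
    exact h2 h1
  -- key inequality by induction
  have hkey : ∀ m : ℕ, Ideal.span {x} * T ^ m ≤ I' * T ^ m + Ideal.span {x} ^ (m + 1) := by
    intro m
    induction m with
    | zero =>
      simp only [pow_zero, mul_one, zero_add, pow_one, Submodule.add_eq_sup]
      exact le_sup_right
    | succ m ih =>
      have h4 : Ideal.span {x} ^ (m + 1) * T ≤ I' * T ^ (m + 1) + Ideal.span {x} ^ (m + 2) := by
        rw [hTdef, mul_add]
        refine add_le_add ?_ ?_
        · exact (Ideal.mul_mono_left (Ideal.pow_right_mono hxT (m + 1))).trans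
            (le_of_eq (mul_comm _ _))
        · exact le_of_eq (pow_succ _ (m + 1)).symm
      calc Ideal.span {x} * T ^ (m + 1) = Ideal.span {x} * T ^ m * T := by ring
        _ ≤ (I' * T ^ m + Ideal.span {x} ^ (m + 1)) * T := Ideal.mul_mono_left ih
        _ = I' * (T ^ m * T) + Ideal.span {x} ^ (m + 1) * T := by ring
        _ = I' * T ^ (m + 1) + Ideal.span {x} ^ (m + 1) * T := by rw [← pow_succ]
        _ ≤ I' * T ^ (m + 1) + (I' * T ^ (m + 1) + Ideal.span {x} ^ (m + 2)) :=
            add_le_add le_rfl h4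
        _ ≤ I' * T ^ (m + 1) + Ideal.span {x} ^ (m + 2) := by
            rw [← add_assoc]; exact add_le_add (by simp) le_rfl
  have hxM : Ideal.span {x} * T ^ (n - 1) ≤ I' * T ^ (n - 1) := by
    have h1 := hkey (n - 1)
    have h2 : Ideal.span {x} ^ (n - 1 + 1) ≤ I' * T ^ (n - 1) := by
      rw [show n - 1 + 1 = n from by omega, Ideal.span_singleton_pow, Ideal.span_le,
        Set.singleton_subset_iff]
      exact hxn
    calc Ideal.span {x} * T ^ (n - 1)
        ≤ I' * T ^ (n - 1) + Ideal.span {x} ^ (n - 1 + 1) := h1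
      _ ≤ I' * T ^ (n - 1) + I' * T ^ (n - 1) := add_le_add le_rfl h2
      _ ≤ I' * T ^ (n - 1) := by simp
  -- witness ideals for the generators
  have hMex : ∀ y ∈ S, ∃ N : Ideal B, N.FG ∧ (∃ s ∈ N, s ∈ nonZeroDivisors B) ∧
      Ideal.span {y} * N ≤ K * N := fun y hy => hI y (hSsub (Finset.mem_coe.mpr hy))
  choose! Nf hNf1 hNf2 hNf3 using hMex
  choose! sf hsf1 hsf2 using hNf2
  have hPfg : (∏ y ∈ S, Nf y).FG := by
    refine Finset.prod_induction _ _ (fun _ _ => Submodule.FG.mul) ?_ (fun y hy => hNf1 y hy)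
    exact ⟨{1}, by simp⟩
  have hPnzd : ∃ s ∈ ∏ y ∈ S, Nf y, s ∈ nonZeroDivisors B :=
    ⟨∏ y ∈ S, sf y, Ideal.prod_mem_prod (fun y hy => hsf1 y hy),
      prod_mem (fun y hy => hsf2 y hy)⟩
  have hIP : I' * (∏ y ∈ S, Nf y) ≤ K * ∏ y ∈ S, Nf y := by
    rw [Ideal.mul_le]
    intro z hz w hw
    have hcol : z ∈ Submodule.colon (K * ∏ y ∈ S, Nf y) ((∏ y ∈ S, Nf y : Ideal B) : Set B) := by
      refine Ideal.span_le.mpr ?_ hz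
      intro y hy
      have hyS : y ∈ S := Finset.mem_coe.mp hy
      rw [SetLike.mem_coe, Submodule.mem_colon]
      intro p hp
      have hyP : Ideal.span {y} * ∏ z ∈ S, Nf z ≤ K * ∏ z ∈ S, Nf z := by
        rw [← Finset.mul_prod_erase S Nf hyS]
        calc Ideal.span {y} * (Nf y * ∏ z ∈ S.erase y, Nf z)
            = (Ideal.span {y} * Nf y) * ∏ z ∈ S.erase y, Nf z := by ring
          _ ≤ (K * Nf y) * ∏ z ∈ S.erase y, Nf z := Ideal.mul_mono_left (hNf3 y hyS)
          _ = K * (Nf y * ∏ z ∈ S.erase y, Nf z) := by ring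
      have := hyP (Ideal.mul_mem_mul (Ideal.mem_span_singleton_self y) hp)
      simpa [smul_eq_mul] using this
    have := Submodule.mem_colon.mp hcol w hw
    simpa [smul_eq_mul] using this
  -- assemble the final witness
  obtain ⟨s, hs1, hs2⟩ := hPnzd
  have hTfg : T.FG := by
    rw [hTdef, Submodule.add_eq_sup]
    exact Submodule.FG.sup (Submodule.fg_span S.finite_toSet) (Submodule.fg_span_singleton x)
  refine ⟨T ^ (n - 1) * ∏ y ∈ S, Nf y, Submodule.FG.mul (Submodule.FG.pow hTfg _) hPfg,
    ⟨r ^ (n - 1) * s, Ideal.mul_mem_mul (Ideal.pow_mem_pow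
      (hI'T (Ideal.subset_span (Finset.mem_coe.mpr (Finset.mem_insert_self r _)))) _) hs1,
      mul_mem (pow_mem hrnzd _) hs2⟩, ?_⟩
  calc Ideal.span {x} * (T ^ (n - 1) * ∏ y ∈ S, Nf y)
      = (Ideal.span {x} * T ^ (n - 1)) * ∏ y ∈ S, Nf y := by ring
    _ ≤ (I' * T ^ (n - 1)) * ∏ y ∈ S, Nf y := Ideal.mul_mono_left hxM
    _ = (I' * ∏ y ∈ S, Nf y) * T ^ (n - 1) := by ring
    _ ≤ (K * ∏ y ∈ S, Nf y) * T ^ (n - 1) := Ideal.mul_mono_left hIP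
    _ = K * (T ^ (n - 1) * ∏ y ∈ S, Nf y) := by ring

theorem isIntegralOverIdeal_of_mem {K : Ideal B} {x : B} (hx : x ∈ K) :
    IsIntegralOverIdeal K x := by
  refine ⟨1, one_pos, fun _ => -x, ?_, ?_⟩
  · intro i h1 h2
    have : i = 1 := by omega
    simpa [this] using neg_mem hx
  · simp

theorem mem_intCl_of_mem {K : Ideal B} {x : B} (hx : x ∈ K) : x ∈ intCl K :=
  Ideal.subset_span (isIntegralOverIdeal_of_mem hx)

theorem le_intCl (K : Ideal B) : K ≤ intCl K := fun _ hx => mem_intCl_of_mem hx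

theorem mem_intCl_iff {K : Ideal B} (hK : ∃ r ∈ K, r ∈ nonZeroDivisors B) {x : B} :
    x ∈ intCl K ↔ HasIC K x := by
  obtain ⟨r, hrK, hr⟩ := hK
  have hset : {y : B | IsIntegralOverIdeal K y} = {y : B | HasIC K y} := by
    ext y
    constructor
    · intro hy
      exact isIntegral_hasIC K K y hy (fun z hz => hasIC_of_mem ⟨r, hr⟩ hz) ⟨r, hrK, hr⟩
    · intro hy
      exact hy.isIntegral
  set Kbar : Ideal B :=
    { carrier := {y : B | HasIC K y}
      add_mem' := fun h1 h2 => HasIC.add h1 h2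
      zero_mem' := hasIC_of_mem ⟨r, hr⟩ K.zero_mem
      smul_mem' := fun c y hy => by simpa [smul_eq_mul] using HasIC.smul c hy } with hKbar
  have : intCl K = Kbar := by
    rw [intCl, hset]
    exact Ideal.span_eq Kbar
  rw [this]
  exact Iff.rfl

end HasIC

section Flat

variable {A B : Type*} [CommRing A] [CommRing B] [Algebra A B]

open scoped TensorProduct

theorem algebraMap_mem_nonZeroDivisors [Module.Flat A B] {r : A}
    (hr : r ∈ nonZeroDivisors A) : algebraMap A B r ∈ nonZeroDivisors B := by
  rw [mem_nonZeroDivisors_iff_right]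
  intro b hb
  set f : A →ₗ[A] A := LinearMap.lsmul A A r with hf
  have hinj : Function.Injective f := by
    intro a₁ a₂ h
    simp only [hf, LinearMap.lsmul_apply, smul_eq_mul] at h
    have h0 : (a₁ - a₂) * r = 0 := by linear_combination h
    have h0' := mem_nonZeroDivisors_iff_right.mp hr _ h0
    exact sub_eq_zero.mp h0'

  have hinj2 : Function.Injective (f.lTensor B) :=
    Module.Flat.lTensor_preserves_injective_linearMap f hinj
  have h1 : f.lTensor B (b ⊗ₜ[A] (1 : A)) = b ⊗ₜ[A] r := by
    simp [hf]
  have h2 : (TensorProduct.rid A B) (b ⊗ₜ[A] r) = algebraMap A B r * b := by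
    simp [TensorProduct.rid_tmul, Algebra.smul_def]
  have h3 : b ⊗ₜ[A] r = 0 := by
    apply (TensorProduct.rid A B).injective
    rw [map_zero, h2, mul_comm]
    exact hb
  have h4 : f.lTensor B (b ⊗ₜ[A] (1 : A)) = 0 := by rw [h1, h3]
  have h5 : b ⊗ₜ[A] (1 : A) = 0 := hinj2 (by rw [h4, map_zero])
  have := congrArg (TensorProduct.rid A B) h5
  simpa using this

theorem mem_of_algebraMap_mem_map [Module.FaithfullyFlat A B] {K : Ideal A} {x : A}
    (hx : algebraMap A B x ∈ K.map (algebraMap A B)) : x ∈ K := by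
  -- step 1 : mk x ⊗ 1 = 0
  have h1 : (Ideal.Quotient.mk K x) ⊗ₜ[A] (1 : B) = (0 : (A ⧸ K) ⊗[A] B) := by
    apply (TensorProduct.quotTensorEquivQuotSMul B K).injective
    rw [TensorProduct.quotTensorEquivQuotSMul_mk_tmul, map_zero]
    rw [Submodule.Quotient.mk_eq_zero]
    rw [Ideal.smul_top_eq_map]
    simpa [Algebra.smul_def] using hx
  -- step 2 : annihilator trick
  set n : A ⧸ K := Ideal.Quotient.mk K x with hn
  set Iann : Ideal A := (Submodule.span A {n}).annihilator with hIann
  have hmul : ∀ r ∈ Iann, r • n = 0 := fun r hr =>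
    Submodule.mem_annihilator_span_singleton n r |>.mp hr
  set inc : (A ⧸ Iann) →ₗ[A] (A ⧸ K) :=
    Submodule.liftQ _ ((LinearMap.lsmul A (A ⧸ K)).flip n) (fun r hr => by
      simpa only [LinearMap.mem_ker, LinearMap.flip_apply, LinearMap.lsmul_apply]
        using hmul r hr) with hinc
  have hinc_inj : Function.Injective inc := by
    rw [← LinearMap.ker_eq_bot]
    refine eq_bot_iff.2 ?_
    intro q hq
    induction q using Quotient.inductionOn' with | h r =>
    simp only [Submodule.Quotient.mk''_eq_mk, LinearMap.mem_ker, hinc,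
      Submodule.liftQ_apply, LinearMap.flip_apply, LinearMap.lsmul_apply] at hq
    rw [Submodule.Quotient.mk''_eq_mk, Submodule.mem_bot, Submodule.Quotient.mk_eq_zero]
    exact (Submodule.mem_annihilator_span_singleton n r).mpr hq
  have hrT_inj : Function.Injective (inc.rTensor B) :=
    Module.Flat.rTensor_preserves_injective_linearMap inc hinc_inj
  have h2 : (Ideal.Quotient.mk Iann (1 : A)) ⊗ₜ[A] (1 : B) = (0 : (A ⧸ Iann) ⊗[A] B) := by
    apply hrT_inj
    rw [map_zero]
    have : inc.rTensor B ((Ideal.Quotient.mk Iann (1 : A)) ⊗ₜ[A] (1 : B))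
        = (inc (Ideal.Quotient.mk Iann 1)) ⊗ₜ[A] (1 : B) := by
      simp [LinearMap.rTensor_tmul]
    rw [this]
    have h10 : inc (Ideal.Quotient.mk Iann 1) = n := by
      show ((LinearMap.lsmul A (A ⧸ K)).flip n) 1 = n
      simp
    rw [h10, hn, h1]
  have h3 : Submodule.Quotient.mk (1 : B) = (0 : B ⧸ (Iann • ⊤ : Submodule A B)) := by
    have := congrArg (TensorProduct.quotTensorEquivQuotSMul B Iann) h2
    rwa [TensorProduct.quotTensorEquivQuotSMul_mk_tmul, map_zero, one_smul] at this
  have h4 : (1 : B) ∈ (Iann • ⊤ : Submodule A B) := Submodule.Quotient.mk_eq_zero _ |>.mp h3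
  have h5 : Iann • (⊤ : Submodule A B) = ⊤ := by
    rw [Ideal.smul_top_eq_map] at h4 ⊢
    have : Iann.map (algebraMap A B) = ⊤ := Ideal.eq_top_iff_one _ |>.mpr (by simpa using h4)
    rw [this]
    rfl
  have h6 : Iann = ⊤ :=
    (Module.FaithfullyFlat.iff_flat_and_ideal_smul_eq_top A B |>.mp inferInstance).2 Iann h5
  have h7 : (1 : A) ∈ Iann := h6 ▸ Submodule.mem_top
  have h8 : n = 0 := by simpa using hmul 1 h7
  rwa [hn, Ideal.Quotient.eq_zero_iff_mem] at h8

end Flat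

theorem mem_ideal_finset_sum {ι A : Type*} [CommRing A] {s : Finset ι} {F : ι → Ideal A} {z : A}
    (hz : z ∈ ∑ i ∈ s, F i) : ∃ g : ι → A, (∀ i ∈ s, g i ∈ F i) ∧ z = ∑ i ∈ s, g i := by
  classical
  induction s using Finset.induction_on generalizing z with
  | empty =>
    refine ⟨0, by simp, ?_⟩
    simpa using (by simpa [Ideal.zero_eq_bot] using hz : z = 0)
  | @insert a s ha ih =>
    rw [Finset.sum_insert ha, Submodule.add_eq_sup] at hz
    obtain ⟨u, hu, v, hv, huv⟩ := Submodule.mem_sup.mp hz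
    obtain ⟨g, hg1, hg2⟩ := ih hv
    refine ⟨Function.update g a u, ?_, ?_⟩
    · intro i hi
      rcases Finset.mem_insert.mp hi with h | h
      · rw [h, Function.update_self]; exact hu
      · rw [Function.update_of_ne (by rintro rfl; exact ha h)]; exact hg1 i h
    · rw [Finset.sum_insert ha, Function.update_self, ← huv, hg2]
      congr 1
      apply Finset.sum_congr rfl
      intro i hi
      rw [Function.update_of_ne (by rintro rfl; exact ha hi)]

theorem le_of_intCl_map_le {A B : Type*} [CommRing A] [CommRing B] [Algebra A B]
    [Module.FaithfullyFlat A B] {I J : Ideal A}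
    (hJc : intCl J = J) (hJnzd : ∃ r ∈ J, r ∈ nonZeroDivisors A)
    (h : intCl (Ideal.map (algebraMap A B) I) ≤ intCl (Ideal.map (algebraMap A B) J)) :
    I ≤ J := by
  intro x hx
  obtain ⟨rJ, hrJ, hrJnzd⟩ := hJnzd
  have hmJnzd : ∃ r ∈ Ideal.map (algebraMap A B) J, r ∈ nonZeroDivisors B :=
    ⟨_, Ideal.mem_map_of_mem _ hrJ, algebraMap_mem_nonZeroDivisors hrJnzd⟩
  have h1 : algebraMap A B x ∈ intCl (Ideal.map (algebraMap A B) J) :=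
    h (mem_intCl_of_mem (Ideal.mem_map_of_mem _ hx))
  have h2 : IsIntegralOverIdeal (Ideal.map (algebraMap A B) J) (algebraMap A B x) :=
    ((mem_intCl_iff hmJnzd).mp h1).isIntegral
  obtain ⟨n, hn, b, hb, heq⟩ := h2
  have hxnK : x ^ n ∈ ∑ i ∈ Finset.Icc 1 n, J ^ i * Ideal.span {x ^ (n - i)} := by
    apply mem_of_algebraMap_mem_map (B := B)
    have hneg : algebraMap A B (x ^ n)
        = -∑ i ∈ Finset.Icc 1 n, b i * (algebraMap A B x) ^ (n - i) := by
      rw [map_pow]; exact eq_neg_of_add_eq_zero_left heq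
    rw [hneg]
    refine neg_mem (Ideal.sum_mem _ fun i hi => ?_)
    obtain ⟨h1i, hin⟩ := Finset.mem_Icc.mp hi
    have hbmem : b i ∈ Ideal.map (algebraMap A B) (J ^ i) := by
      rw [Ideal.map_pow]; exact hb i h1i hin
    have hxp : (algebraMap A B x) ^ (n - i)
        ∈ Ideal.map (algebraMap A B) (Ideal.span {x ^ (n - i)}) := by
      rw [← map_pow]; exact Ideal.mem_map_of_mem _ (Ideal.mem_span_singleton_self _)
    have hmem : b i * (algebraMap A B x) ^ (n - i)
        ∈ Ideal.map (algebraMap A B) (J ^ i * Ideal.span {x ^ (n - i)}) := by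
      rw [Ideal.map_mul]; exact Ideal.mul_mem_mul hbmem hxp
    refine Ideal.map_mono ?_ hmem
    refine Finset.single_le_sum (f := fun i => J ^ i * Ideal.span {x ^ (n - i)}) ?_ hi
    intro k _
    rw [Ideal.zero_eq_bot]
    exact bot_le
  obtain ⟨g, hg1, hg2⟩ := mem_ideal_finset_sum hxnK
  have hgz : ∀ i ∈ Finset.Icc 1 n, ∃ z ∈ J ^ i, x ^ (n - i) * z = g i := by
    intro i hi
    have := hg1 i hi
    rw [mul_comm] at this
    exact Ideal.mem_span_singleton_mul.mp this
  choose! zf hzf1 hzf2 using hgz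
  have hint : IsIntegralOverIdeal J x := by
    refine ⟨n, hn, fun i => -(zf i), ?_, ?_⟩
    · intro i hi1 hi2
      exact neg_mem (hzf1 i (Finset.mem_Icc.mpr ⟨hi1, hi2⟩))
    · have hsum : ∑ i ∈ Finset.Icc 1 n, -(zf i) * x ^ (n - i)
          = -∑ i ∈ Finset.Icc 1 n, g i := by
        rw [← Finset.sum_neg_distrib]
        apply Finset.sum_congr rfl
        intro i hi
        rw [← hzf2 i hi]
        ring
      rw [hsum, hg2]
      simp
  rw [← hJc]
  exact Ideal.subset_span hint

/-- For a faithfully flat algebra `B` over a Noetherian ring `A`, the map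
`I ↦ intCl (IB)` is an injective monoid homomorphism `ic(A) → ic(B)`. -/
theorem ic_embeds_faithfullyFlat {A B : Type*} [CommRing A] [IsNoetherianRing A]
    [CommRing B] [Algebra A B] [Module.FaithfullyFlat A B]
    (I J : Ideal A)
    (hIc : intCl I = I) (hInzd : ∃ r ∈ I, r ∈ nonZeroDivisors A)
    (hJc : intCl J = J) (hJnzd : ∃ r ∈ J, r ∈ nonZeroDivisors A) :
    intCl (Ideal.map (algebraMap A B) (I * J)) =
        intCl (intCl (Ideal.map (algebraMap A B) I) * intCl (Ideal.map (algebraMap A B) J)) ∧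
      (intCl (Ideal.map (algebraMap A B) I) = intCl (Ideal.map (algebraMap A B) J) → I = J) := by
  obtain ⟨rI, hrI, hrInzd⟩ := hInzd
  obtain ⟨rJ, hrJ, hrJnzd⟩ := hJnzd
  set f := algebraMap A B with hf
  have hrI' : f rI ∈ Ideal.map f I := Ideal.mem_map_of_mem f hrI
  have hrJ' : f rJ ∈ Ideal.map f J := Ideal.mem_map_of_mem f hrJ
  have hrInzd' : f rI ∈ nonZeroDivisors B := algebraMap_mem_nonZeroDivisors hrInzd
  have hrJnzd' : f rJ ∈ nonZeroDivisors B := algebraMap_mem_nonZeroDivisors hrJnzd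
  have hmInzd : ∃ r ∈ Ideal.map f I, r ∈ nonZeroDivisors B := ⟨f rI, hrI', hrInzd'⟩
  have hmJnzd : ∃ r ∈ Ideal.map f J, r ∈ nonZeroDivisors B := ⟨f rJ, hrJ', hrJnzd'⟩
  have hK0nzd : ∃ r ∈ Ideal.map f I * Ideal.map f J, r ∈ nonZeroDivisors B :=
    ⟨f rI * f rJ, Ideal.mul_mem_mul hrI' hrJ', mul_mem hrInzd' hrJnzd'⟩
  have hLnzd : ∃ r ∈ intCl (Ideal.map f I) * intCl (Ideal.map f J), r ∈ nonZeroDivisors B :=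
    ⟨f rI * f rJ, Ideal.mul_mem_mul (mem_intCl_of_mem hrI') (mem_intCl_of_mem hrJ'),
      mul_mem hrInzd' hrJnzd'⟩
  constructor
  · rw [Ideal.map_mul]
    ext x
    rw [mem_intCl_iff hK0nzd, mem_intCl_iff hLnzd]
    constructor
    · intro hx
      exact hx.mono (Ideal.mul_mono (le_intCl _) (le_intCl _))
    · intro hx
      refine isIntegral_hasIC _ _ _ hx.isIntegral ?_ ?_
      · intro y hy
        refine Submodule.mul_induction_on hy ?_ ?_
        · intro u hu v hv
          exact HasIC.mul ((mem_intCl_iff hmInzd).mp hu) ((mem_intCl_iff hmJnzd).mp hv)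
        · intro u v h1 h2
          exact h1.add h2
      · obtain ⟨r, hr1, hr2⟩ := hLnzd
        exact ⟨r, hr1, hr2⟩
  · intro hEq
    refine le_antisymm ?_ ?_
    · exact le_of_intCl_map_le hJc ⟨rJ, hrJ, hrJnzd⟩ (le_of_eq hEq)
    · exact le_of_intCl_map_le hIc ⟨rI, hrI, hrInzd⟩ (le_of_eq hEq.symm)
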